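/- If x̄ is an AM-stationary point of problem (P) that satisfies the AM-regularity condition, then x̄ is an M-stationary point of (P). -/

import Mathlib

open Filter Topology RealInnerProductSpace

noncomputable section

/-- The (set-valued) Euclidean projection of `x` onto `D`:
`Π_D(x) = argmin_{z ∈ D} ‖z - x‖`. -/
def projSet {E : Type*} [NormedAddCommGroup E] (D : Set E) (x : E) : Set E :=
  {z | z ∈ D ∧ ∀ w ∈ D, ‖z - x‖ ≤ ‖w - x‖}

/-- The limiting (Mordukhovich) normal cone to `D` at `x`:
`N_D^lim(x) = limsup_{v → x} cone(v - Π_D(v))`, empty outside `D`. -/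
def limNormalCone {E : Type*} [NormedAddCommGroup E] [NormedSpace ℝ E]
    (D : Set E) (x : E) : Set E :=
  {w | x ∈ D ∧ ∃ v ws : ℕ → E,
    Tendsto v atTop (𝓝 x) ∧ Tendsto ws atTop (𝓝 w) ∧
    ∀ j, ∃ t : ℝ, ∃ p, 0 ≤ t ∧ p ∈ projSet D (v j) ∧ ws j = t • (v j - p)}

/-- The normal cone (of convex analysis) to the convex set `C` at `y`, empty outside `C`. -/
def convNormalCone {E : Type*} [NormedAddCommGroup E] [InnerProductSpace ℝ E]
    (C : Set E) (y : E) : Set E :=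
  {l | y ∈ C ∧ ∀ c ∈ C, ⟪l, c - y⟫ ≤ 0}

variable {X Y : Type*} [NormedAddCommGroup X] [InnerProductSpace ℝ X] [FiniteDimensional ℝ X]
  [NormedAddCommGroup Y] [InnerProductSpace ℝ Y] [FiniteDimensional ℝ Y]

/-- `xb` is an M-stationary (Mordukhovich-stationary) point of problem (P):
minimize `f x` s.t. `G x ∈ C`, `x ∈ D`. -/
def MStationary (f : X → ℝ) (G : X → Y) (C : Set Y) (D : Set X) (xb : X) : Prop :=
  G xb ∈ C ∧ xb ∈ D ∧
    ∃ l : Y, l ∈ convNormalCone C (G xb) ∧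
      ∃ w ∈ limNormalCone D xb,
        gradient f xb + ContinuousLinearMap.adjoint (fderiv ℝ G xb) l + w = 0

/-- `xb` is an AM-stationary (asymptotically M-stationary) point of problem (P). -/
def AMStationary (f : X → ℝ) (G : X → Y) (C : Set Y) (D : Set X) (xb : X) : Prop :=
  G xb ∈ C ∧ xb ∈ D ∧
    ∃ (xs εs : ℕ → X) (zs lam : ℕ → Y),
      Tendsto xs atTop (𝓝 xb) ∧ Tendsto εs atTop (𝓝 0) ∧ Tendsto zs atTop (𝓝 0) ∧
      ∀ k, lam k ∈ convNormalCone C (G (xs k) - zs k) ∧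
        ∃ w ∈ limNormalCone D (xs k),
          εs k = gradient f (xs k) +
            ContinuousLinearMap.adjoint (fderiv ℝ G (xs k)) (lam k) + w

/-- The set `M(x,z) = G'(x)* N_C(G(x) - z) + N_D^lim(x)`. -/
def Mset (G : X → Y) (C : Set Y) (D : Set X) (x : X) (z : Y) : Set X :=
  {v | ∃ l ∈ convNormalCone C (G x - z), ∃ w ∈ limNormalCone D x,
    v = ContinuousLinearMap.adjoint (fderiv ℝ G x) l + w}

/-- `xb` is AM-regular: `limsup_{x → xb, z → 0} M(x,z) ⊆ M(xb, 0)`. -/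
def AMRegular (G : X → Y) (C : Set Y) (D : Set X) (xb : X) : Prop :=
  ∀ v : X,
    (∃ (xs : ℕ → X) (zs : ℕ → Y) (vs : ℕ → X),
      (∀ k, xs k ∈ D) ∧ Tendsto xs atTop (𝓝 xb) ∧ Tendsto zs atTop (𝓝 0) ∧
      Tendsto vs atTop (𝓝 v) ∧ ∀ k, vs k ∈ Mset G C D (xs k) (zs k)) →
    v ∈ Mset G C D xb 0

/-- an AM-stationary point satisfying AM-regularity is M-stationary. -/
theorem AM_stationary_and_AM_regular_implies_M_stationary
    (f : X → ℝ) (G : X → Y) (C : Set Y) (D : Set X)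
    (hf : ContDiff ℝ 1 f) (hG : ContDiff ℝ 1 G)
    (hCne : C.Nonempty) (hCcl : IsClosed C) (hCconv : Convex ℝ C)
    (hDne : D.Nonempty) (hDcl : IsClosed D)
    (xb : X)
    (hAM : AMStationary f G C D xb) (hreg : AMRegular G C D xb) :
    MStationary f G C D xb := by
  obtain ⟨hGC, hxbD, xs, εs, zs, lam, hxs, hεs, hzs, hk⟩ := hAM
  -- each xs k ∈ D
  have hxsD : ∀ k, xs k ∈ D := fun k => by
    obtain ⟨_, w, hw, _⟩ := hk k
    exact hw.1
  set vs : ℕ → X := fun k => εs k - gradient f (xs k) with hvs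
  have hgradcont : Continuous (fun x => gradient f x) := by
    have hc : Continuous (fun x => fderiv ℝ f x) := hf.continuous_fderiv one_ne_zero
    exact ((InnerProductSpace.toDual ℝ X).symm.continuous.comp hc : _)
  have hvslim : Tendsto vs atTop (𝓝 (-gradient f xb)) := by
    have h1 : Tendsto (fun k => gradient f (xs k)) atTop (𝓝 (gradient f xb)) :=
      (hgradcont.tendsto xb).comp hxs
    have := hεs.sub h1
    simpa using this
  have hvsmem : ∀ k, vs k ∈ Mset G C D (xs k) (zs k) := fun k => by
    obtain ⟨hlam, w, hw, heq⟩ := hk k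
    exact ⟨lam k, hlam, w, hw, by rw [hvs]; simp only; rw [heq]; abel⟩
  have hmem : -gradient f xb ∈ Mset G C D xb 0 :=
    hreg _ ⟨xs, zs, vs, hxsD, hxs, hzs, hvslim, hvsmem⟩
  obtain ⟨l, hl, w, hw, heq⟩ := hmem
  refine ⟨hGC, hxbD, l, by simpa using hl, w, hw, ?_⟩
  have : gradient f xb = -(ContinuousLinearMap.adjoint (fderiv ℝ G xb) l + w) := by
    rw [← heq]; abel
  rw [this]; abel
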